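/- Let Γ₀ be a finite set of configurations, and define recursively Ψ₀ = Γ₀ and Ψᵢ₊₁ = the set of members of Ψᵢ ∪ {combinations, having no empty set among their sets, of pairs of members of Ψᵢ} that are not strictly dominated by any member of that union. Then there exists an index i with Ψᵢ₊₁ = Ψᵢ. (The procedure NewRE terminates in finitely many steps.) -/
import Mathlib

namespace RoundElim

/-- The configuration (multiset of cardinality `δ`) associated to a function `Fin δ → α`. -/
def ofFn {α : Type*} {δ : ℕ} (f : Fin δ → α) : Multiset α :=
  (List.ofFn f : List α)

variable {σ : Type*} [DecidableEq σ]

/-- `DominatedBy A B` means: configuration `B` dominates configuration `A`. -/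
def DominatedBy (A B : Multiset (Finset σ)) : Prop :=
  Multiset.Rel (· ⊆ ·) A B

/-- `StrictlyDominatedBy A B` means: configuration `B` strictly dominates configuration `A`. -/
def StrictlyDominatedBy (A B : Multiset (Finset σ)) : Prop :=
  DominatedBy A B ∧ ¬ DominatedBy B A

/-- The combination of the representatives `a`, `b` with respect to the permutation `φ`
and the index `u`: union at position `u`, intersection everywhere else. -/
def combineFn {δ : ℕ} (a b : Fin δ → Finset σ) (φ : Equiv.Perm (Fin δ)) (u : Fin δ) :
    Fin δ → Finset σ :=
  fun i => if i = u then a i ∪ b (φ i) else a i ∩ b (φ i)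

/-- `C` is a combination of the configurations `A` and `B`. -/
def IsCombination (δ : ℕ) (C A B : Multiset (Finset σ)) : Prop :=
  ∃ (a b : Fin δ → Finset σ) (φ : Equiv.Perm (Fin δ)) (u : Fin δ),
    ofFn a = A ∧ ofFn b = B ∧ ofFn (combineFn a b φ u) = C

/-- `C` satisfies the universal quantifier w.r.t. the edge constraint `E`. -/
def SatUQ (E : Set (Multiset σ)) (C : Multiset (Finset σ)) : Prop :=
  ∀ M : Multiset σ, Multiset.Rel (· ∈ ·) M C → M ∈ E

/-- A singleton configuration: all its sets have exactly one element. -/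
def IsSingletonConfig (C : Multiset (Finset σ)) : Prop :=
  ∀ s ∈ C, s.card = 1

/-- The combination-closure of a set `Γ` of configurations: the smallest set containing `Γ`
and containing every combination of two of its members. -/
inductive CombClosure (δ : ℕ) (Γ : Set (Multiset (Finset σ))) :
    Multiset (Finset σ) → Prop
  | base {C : Multiset (Finset σ)} : C ∈ Γ → CombClosure δ Γ C
  | comb {A B C : Multiset (Finset σ)} : CombClosure δ Γ A → CombClosure δ Γ B →
      IsCombination δ C A B → CombClosure δ Γ C


/-- One step of the procedure `NewRE`: add all combinations (having no empty set among their
sets) of pairs of members, then keep only the members not strictly dominated by any member. -/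
def psiStep (δ : ℕ) (Ψ : Set (Multiset (Finset σ))) : Set (Multiset (Finset σ)) :=
  {C ∈ Ψ ∪ {C | (∃ A ∈ Ψ, ∃ B ∈ Ψ, IsCombination δ C A B) ∧ ∀ s ∈ C, s.Nonempty} |
    ¬ ∃ C' ∈ Ψ ∪ {C | (∃ A ∈ Ψ, ∃ B ∈ Ψ, IsCombination δ C A B) ∧ ∀ s ∈ C, s.Nonempty},
      StrictlyDominatedBy C C'}

/-- The sequence `Ψ₀, Ψ₁, Ψ₂, …` computed by the procedure `NewRE`. -/
def psiSeq (δ : ℕ) (Γ₀ : Set (Multiset (Finset σ))) : ℕ → Set (Multiset (Finset σ))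
  | 0 => Γ₀
  | (i + 1) => psiStep δ (psiSeq δ Γ₀ i)

set_option linter.unusedSectionVars false


lemma dom_refl (A : Multiset (Finset σ)) : DominatedBy A A :=
  Multiset.rel_refl_of_refl_on fun _ _ => le_refl _

lemma dom_trans {A B C : Multiset (Finset σ)} (h1 : DominatedBy A B)
    (h2 : DominatedBy B C) : DominatedBy A C :=
  Multiset.Rel.trans _ h1 h2

lemma dom_card {A B : Multiset (Finset σ)} (h : DominatedBy A B) :
    Multiset.card A = Multiset.card B :=
  Multiset.card_eq_card_of_rel h

/-- The union set used in `psiStep`. -/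
def bigU (δ : ℕ) (Ψ : Set (Multiset (Finset σ))) : Set (Multiset (Finset σ)) :=
  Ψ ∪ {C | (∃ A ∈ Ψ, ∃ B ∈ Ψ, IsCombination δ C A B) ∧ ∀ s ∈ C, s.Nonempty}

lemma psiStep_eq (δ : ℕ) (Ψ : Set (Multiset (Finset σ))) :
    psiStep δ Ψ = {C ∈ bigU δ Ψ | ¬ ∃ C' ∈ bigU δ Ψ, StrictlyDominatedBy C C'} := rfl

lemma psiStep_subset_bigU (δ : ℕ) (Ψ : Set (Multiset (Finset σ))) :
    psiStep δ Ψ ⊆ bigU δ Ψ := fun _ h => h.1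

/-- Downward closure under domination. -/
def domCl (Ψ : Set (Multiset (Finset σ))) : Set (Multiset (Finset σ)) :=
  {C | ∃ M ∈ Ψ, DominatedBy C M}

lemma subset_domCl (Ψ : Set (Multiset (Finset σ))) : Ψ ⊆ domCl Ψ :=
  fun C hC => ⟨C, hC, dom_refl C⟩

lemma card_ofFn {δ : ℕ} (f : Fin δ → Finset σ) : Multiset.card (ofFn f) = δ := by
  simp [ofFn]

lemma S_finite [Fintype σ] (δ : ℕ) :
    {C : Multiset (Finset σ) | Multiset.card C = δ}.Finite := by
  classical
  have : {C : Multiset (Finset σ) | Multiset.card C = δ}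
      = Set.range (fun s : Sym (Finset σ) δ => (s : Multiset (Finset σ))) := by
    ext C
    constructor
    · intro h; exact ⟨⟨C, h⟩, rfl⟩
    · rintro ⟨⟨s, hs⟩, rfl⟩; exact hs
  rw [this]
  exact Set.finite_range _

lemma maximal_above {T : Set (Multiset (Finset σ))} (hT : T.Finite)
    {C : Multiset (Finset σ)} (hC : C ∈ T) :
    ∃ M ∈ T, DominatedBy C M ∧ ∀ C' ∈ T, ¬ StrictlyDominatedBy M C' := by
  classical
  set F := hT.toFinset with hF
  have hCF : C ∈ F := hT.mem_toFinset.2 hC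
  set up : Multiset (Finset σ) → ℕ := fun x => (F.filter (fun y => DominatedBy x y)).card
  set T' : Finset (Multiset (Finset σ)) := F.filter (fun y => DominatedBy C y)
  have hCT' : C ∈ T' := Finset.mem_filter.2 ⟨hCF, dom_refl C⟩
  obtain ⟨M, hM, hmin⟩ := T'.exists_min_image up ⟨C, hCT'⟩
  have hMF : M ∈ F := (Finset.mem_filter.1 hM).1
  have hCM : DominatedBy C M := (Finset.mem_filter.1 hM).2
  refine ⟨M, hT.mem_toFinset.1 hMF, hCM, ?_⟩
  rintro C' hC' ⟨hMC', hnC'M⟩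
  have hC'F : C' ∈ F := hT.mem_toFinset.2 hC'
  have hC'T' : C' ∈ T' := Finset.mem_filter.2 ⟨hC'F, dom_trans hCM hMC'⟩
  have hssub : F.filter (fun y => DominatedBy C' y) ⊂ F.filter (fun y => DominatedBy M y) := by
    constructor
    · intro y hy
      rcases Finset.mem_filter.1 hy with ⟨hyF, hy2⟩
      exact Finset.mem_filter.2 ⟨hyF, dom_trans hMC' hy2⟩
    · intro hsub
      have : M ∈ F.filter (fun y => DominatedBy C' y) :=
        hsub (Finset.mem_filter.2 ⟨hMF, dom_refl M⟩)
      exact hnC'M (Finset.mem_filter.1 this).2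
  have := hmin C' hC'T'
  have hlt : up C' < up M := Finset.card_lt_card hssub
  omega

section Main

variable [Fintype σ] {δ : ℕ} {Γ₀ : Set (Multiset (Finset σ))}

/-- Everything in `bigU δ Ψ` has cardinality `δ`, provided `Ψ` does. -/
lemma bigU_subset_S {Ψ : Set (Multiset (Finset σ))} (hΨ : Ψ ⊆ {C : Multiset (Finset σ) | Multiset.card C = δ}) :
    bigU δ Ψ ⊆ {C : Multiset (Finset σ) | Multiset.card C = δ} := by
  rintro C (hC | ⟨⟨A, _, B, _, a, b, φ, u, _, _, hc⟩, _⟩)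
  · exact hΨ hC
  · simpa [← hc] using card_ofFn _

lemma psiSeq_subset_S (hΓcard : ∀ C ∈ Γ₀, Multiset.card C = δ) (i : ℕ) :
    psiSeq δ Γ₀ i ⊆ {C : Multiset (Finset σ) | Multiset.card C = δ} := by
  induction i with
  | zero => exact hΓcard
  | succ i ih =>
      exact fun C hC => bigU_subset_S ih (psiStep_subset_bigU δ _ hC)

lemma domCl_subset_S {Ψ : Set (Multiset (Finset σ))} (hΨ : Ψ ⊆ {C : Multiset (Finset σ) | Multiset.card C = δ}) :
    domCl Ψ ⊆ {C : Multiset (Finset σ) | Multiset.card C = δ} := by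
  rintro C ⟨M, hM, hCM⟩
  have := dom_card hCM
  have := hΨ hM
  simp only [Set.mem_setOf_eq] at *
  omega

/-- Every member of `bigU δ Ψ` is dominated by a member of `psiStep δ Ψ`. -/
lemma bigU_subset_domCl_psiStep {Ψ : Set (Multiset (Finset σ))} (hfin : (bigU δ Ψ).Finite) :
    bigU δ Ψ ⊆ domCl (psiStep δ Ψ) := by
  intro C hC
  obtain ⟨M, hM, hCM, hmax⟩ := maximal_above hfin hC
  refine ⟨M, ⟨hM, ?_⟩, hCM⟩
  rintro ⟨C', hC', hsd⟩
  exact hmax C' hC' hsd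

lemma domCl_mono_step {Ψ : Set (Multiset (Finset σ))} (hfin : (bigU δ Ψ).Finite) :
    domCl Ψ ⊆ domCl (psiStep δ Ψ) := by
  rintro C ⟨M, hM, hCM⟩
  obtain ⟨M', hM', hMM'⟩ := bigU_subset_domCl_psiStep hfin (Or.inl hM)
  exact ⟨M', hM', dom_trans hCM hMM'⟩

/-- If the downward closure is stable across a step, the `psi` sets grow. -/
lemma psi_grows {Ψprev : Set (Multiset (Finset σ))}
    (hU : bigU δ (psiStep δ Ψprev) ⊆ domCl (psiStep δ Ψprev)) :
    psiStep δ Ψprev ⊆ psiStep δ (psiStep δ Ψprev) := by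
  intro C hC
  obtain ⟨hCU, hCn⟩ := hC
  refine ⟨Or.inl ⟨hCU, hCn⟩, ?_⟩
  rintro ⟨C', hC', hCC', hnC'C⟩
  obtain ⟨C'', hC'', hC'C''⟩ := hU hC'
  have hCC'' : DominatedBy C C'' := dom_trans hCC' hC'C''
  have hnC''C : ¬ DominatedBy C'' C := fun h => hnC'C (dom_trans hC'C'' h)
  exact hCn ⟨C'', psiStep_subset_bigU δ Ψprev hC'', hCC'', hnC''C⟩

lemma measure_le {g1 g2 p1 p2 B : ℕ} (h : g1 ≤ g2) (hp : p1 ≤ p2) :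
    g1 * (B + 1) + p1 ≤ g2 * (B + 1) + p2 := by
  have := mul_le_mul_left h (B + 1)
  omega

lemma measure_lt {g1 g2 p1 B : ℕ} (h : g1 < g2) (hp1 : p1 ≤ B) (p2 : ℕ) :
    g1 * (B + 1) + p1 < g2 * (B + 1) + p2 := by
  have h1 : (g1 + 1) * (B + 1) ≤ g2 * (B + 1) := mul_le_mul_left h (B + 1)
  have h2 : (g1 + 1) * (B + 1) = g1 * (B + 1) + (B + 1) := by ring
  omega

lemma nat_repeat (g : ℕ → ℕ) (B : ℕ) (mono : ∀ i, g i ≤ g (i + 1))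
    (bd : ∀ i, g i ≤ B) : ∃ i, g (i + 1) = g i := by
  by_contra h
  push_neg at h
  have hsm : StrictMono g := strictMono_nat_of_lt_succ fun n => lt_of_le_of_ne (mono n) (h n).symm
  have h1 : B + 1 ≤ g (B + 1) := hsm.id_le (B + 1)
  have h2 := bd (B + 1)
  omega

theorem newRE_terminates' (hΓcard : ∀ C ∈ Γ₀, Multiset.card C = δ) :
    ∃ i : ℕ, psiSeq δ Γ₀ (i + 1) = psiSeq δ Γ₀ i := by
  classical
  set S := {C : Multiset (Finset σ) | Multiset.card C = δ} with hS
  have hSfin : S.Finite := S_finite δ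
  set B := S.ncard with hB
  have hpsiS : ∀ i, psiSeq δ Γ₀ i ⊆ S := psiSeq_subset_S hΓcard
  have hpsifin : ∀ i, (psiSeq δ Γ₀ i).Finite := fun i => hSfin.subset (hpsiS i)
  have hUS : ∀ i, bigU δ (psiSeq δ Γ₀ i) ⊆ S := fun i => bigU_subset_S (hpsiS i)
  have hUfin : ∀ i, (bigU δ (psiSeq δ Γ₀ i)).Finite := fun i => hSfin.subset (hUS i)
  have hDS : ∀ i, domCl (psiSeq δ Γ₀ i) ⊆ S := fun i => domCl_subset_S (hpsiS i)
  have hDfin : ∀ i, (domCl (psiSeq δ Γ₀ i)).Finite := fun i => hSfin.subset (hDS i)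
  set g : ℕ → ℕ := fun i => (domCl (psiSeq δ Γ₀ i)).ncard with hg
  set p : ℕ → ℕ := fun i => (psiSeq δ Γ₀ i).ncard with hp
  have hgB : ∀ i, g i ≤ B := fun i => Set.ncard_le_ncard (hDS i) hSfin
  have hpB : ∀ i, p i ≤ B := fun i => Set.ncard_le_ncard (hpsiS i) hSfin
  have hDmono : ∀ i, domCl (psiSeq δ Γ₀ i) ⊆ domCl (psiSeq δ Γ₀ (i + 1)) :=
    fun i => domCl_mono_step (hUfin i)
  set m : ℕ → ℕ := fun i => g i * (B + 1) + p i with hm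
  -- key: if the downward closures at i+1 and i+2 agree, Ψ grows
  have key : ∀ i, domCl (psiSeq δ Γ₀ (i + 1)) = domCl (psiSeq δ Γ₀ (i + 2)) →
      psiSeq δ Γ₀ (i + 1) ⊆ psiSeq δ Γ₀ (i + 2) := by
    intro i hDeq
    have hU : bigU δ (psiSeq δ Γ₀ (i + 1)) ⊆ domCl (psiSeq δ Γ₀ (i + 1)) := by
      rw [hDeq]
      exact bigU_subset_domCl_psiStep (hUfin (i + 1))
    exact psi_grows hU
  have mmono : ∀ i, m (i + 1) ≤ m (i + 2) := by
    intro i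
    by_cases hDeq : domCl (psiSeq δ Γ₀ (i + 1)) = domCl (psiSeq δ Γ₀ (i + 2))
    · have hgeq : g (i + 1) = g (i + 2) := by simp [hg, hDeq]
      have hple : p (i + 1) ≤ p (i + 2) :=
        Set.ncard_le_ncard (key i hDeq) (hpsifin (i + 2))
      exact measure_le (le_of_eq hgeq) hple
    · have hglt : g (i + 1) < g (i + 2) :=
        Set.ncard_lt_ncard ⟨hDmono (i + 1), fun h => hDeq (le_antisymm (hDmono (i + 1)) h)⟩
          (hDfin (i + 2))
      exact le_of_lt (measure_lt hglt (hpB (i + 1)) _)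
  obtain ⟨i, hi⟩ := nat_repeat (fun j => m (j + 1)) (B * (B + 1) + B)
    (fun j => mmono j)
    (fun j => measure_le (hgB (j + 1)) (hpB (j + 1)))
  -- hi : m (i + 2) = m (i + 1)
  have hDeq : domCl (psiSeq δ Γ₀ (i + 1)) = domCl (psiSeq δ Γ₀ (i + 2)) := by
    by_contra hne
    have hglt : g (i + 1) < g (i + 2) :=
      Set.ncard_lt_ncard ⟨hDmono (i + 1), fun h => hne (le_antisymm (hDmono (i + 1)) h)⟩
        (hDfin (i + 2))
    exact absurd hi (Nat.ne_of_gt (measure_lt hglt (hpB (i + 1)) _))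
  have hgeq : g (i + 1) = g (i + 2) := by simp [hg, hDeq]
  have hpeq : p (i + 2) = p (i + 1) := by
    have hi' : g (i + 2) * (B + 1) + p (i + 2) = g (i + 1) * (B + 1) + p (i + 1) := hi
    rw [← hgeq] at hi'
    omega
  refine ⟨i + 1, ?_⟩
  exact (Set.eq_of_subset_of_ncard_le (key i hDeq) (le_of_eq hpeq) (hpsifin (i + 2))).symm

end Main


/-- The procedure `NewRE` terminates in finitely many steps. -/
theorem newRE_terminates {σ : Type*} [Fintype σ] [DecidableEq σ] (δ : ℕ) (hδ : 0 < δ)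
    (Γ₀ : Set (Multiset (Finset σ))) (hfin : Γ₀.Finite)
    (hΓcard : ∀ C ∈ Γ₀, Multiset.card C = δ) :
    ∃ i : ℕ, psiSeq δ Γ₀ (i + 1) = psiSeq δ Γ₀ i :=
  newRE_terminates' hΓcard

end RoundElim
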